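/- arXiv:2409.07099 — 5 statements merged into one kernel-verified Lean document; each statement's English description precedes it below -/
import Mathlib

section
/- If G has m ≥ 1 edges, then m·(R_g + σ²(z^{1/2})) ≤ SO(G), where R_g is the geometric mean of the d-radii of the edges of G and σ²(z^{1/2}) = (1/m) Σ_{uv ∈ E(G)} (√|z_{uv}| − (1/m) Σ_{u'v' ∈ E(G)} √|z_{u'v'}|)² is the variance of the square roots of the d-radii. -/
open Finset Real

noncomputable def dRad {V : Type*} [Fintype V] (G : SimpleGraph V) [DecidableRel G.Adj]
    (e : Sym2 V) : ℝ :=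
  Sym2.lift ⟨fun u v => Real.sqrt ((G.degree u : ℝ) ^ 2 + (G.degree v : ℝ) ^ 2),
    fun u v => by simp [add_comm]⟩ e

noncomputable def somborIndex {V : Type*} [Fintype V] [DecidableEq V] (G : SimpleGraph V)
    [DecidableRel G.Adj] : ℝ :=
  ∑ e ∈ G.edgeFinset, dRad G e

lemma dRad_nonneg {V : Type*} [Fintype V] (G : SimpleGraph V) [DecidableRel G.Adj]
    (e : Sym2 V) : 0 ≤ dRad G e := by
  induction e using Sym2.ind with
  | _ u v => exact Real.sqrt_nonneg _

/-- If `G` has `m ≥ 1` edges, then `m·(R_g + σ²(z^{1/2})) ≤ SO(G)`, where `R_g` is the geometric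
mean of the d-radii and `σ²(z^{1/2})` is the variance of the square roots of the d-radii. -/
theorem stmt4 {V : Type*} [Fintype V] [DecidableEq V] (G : SimpleGraph V) [DecidableRel G.Adj]
    (m : ℕ) (hm : G.edgeFinset.card = m) (h1 : 1 ≤ m) :
    (m : ℝ) * ((∏ e ∈ G.edgeFinset, dRad G e) ^ ((1 : ℝ) / m)
        + (1 / m) * ∑ e ∈ G.edgeFinset,
            (Real.sqrt (dRad G e) - (1 / m) * ∑ e' ∈ G.edgeFinset, Real.sqrt (dRad G e')) ^ 2)
      ≤ somborIndex G := by
  set E := G.edgeFinset with hE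
  set a : Sym2 V → ℝ := fun e => Real.sqrt (dRad G e) with haa
  have hmpos : (0 : ℝ) < m := by exact_mod_cast h1
  have hmne : (m : ℝ) ≠ 0 := ne_of_gt hmpos
  set A : ℝ := (1 / m) * ∑ e ∈ E, a e with hA
  have hanonneg : ∀ e ∈ E, 0 ≤ a e := fun e _ => Real.sqrt_nonneg _
  have hAnonneg : 0 ≤ A := by
    apply mul_nonneg (by positivity)
    exact Finset.sum_nonneg hanonneg
  have hsq : ∀ e ∈ E, a e ^ 2 = dRad G e := fun e _ =>
    Real.sq_sqrt (dRad_nonneg G e)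
  -- variance identity
  have hvar : ∑ e ∈ E, (a e - A) ^ 2 = somborIndex G - m * A ^ 2 := by
    have : ∑ e ∈ E, (a e - A) ^ 2
        = ∑ e ∈ E, (a e ^ 2) - 2 * A * ∑ e ∈ E, a e + m * A ^ 2 := by
      rw [Finset.sum_congr rfl (fun e _ => by ring :
        ∀ e ∈ E, (a e - A) ^ 2 = a e ^ 2 - 2 * A * a e + A ^ 2)]
      rw [Finset.sum_add_distrib, Finset.sum_sub_distrib, ← Finset.mul_sum,
        Finset.sum_const, hm, nsmul_eq_mul]
    rw [this]
    have hsum : ∑ e ∈ E, a e = m * A := by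
      rw [hA]; field_simp
    have hSO : ∑ e ∈ E, (a e ^ 2) = somborIndex G :=
      Finset.sum_congr rfl hsq
    rw [hsum, hSO]; ring
  -- AM-GM
  have hgm : (∏ e ∈ E, dRad G e) ^ ((1 : ℝ) / m) ≤ A ^ 2 := by
    have hprod : ∏ e ∈ E, dRad G e = (∏ e ∈ E, a e) ^ 2 := by
      rw [← Finset.prod_pow]
      exact (Finset.prod_congr rfl hsq).symm
    have hpa : (0 : ℝ) ≤ ∏ e ∈ E, a e := Finset.prod_nonneg hanonneg
    have hamgm : ∏ e ∈ E, (a e) ^ ((1 : ℝ) / m) ≤ A := by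
      have := Real.geom_mean_le_arith_mean_weighted E (fun _ => (1 : ℝ) / m) a
        (fun _ _ => by positivity)
        (by rw [Finset.sum_const, hm, nsmul_eq_mul]; field_simp)
        hanonneg
      calc ∏ e ∈ E, (a e) ^ ((1 : ℝ) / m) ≤ ∑ e ∈ E, (1 / m) * a e := this
        _ = A := by rw [hA, Finset.mul_sum]
    have h1 : (∏ e ∈ E, dRad G e) ^ ((1 : ℝ) / m)
        = (∏ e ∈ E, (a e) ^ ((1 : ℝ) / m)) ^ 2 := by
      rw [hprod, ← Real.rpow_natCast ((∏ e ∈ E, a e)) 2, ← Real.rpow_mul hpa,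
        mul_comm, Real.rpow_mul hpa, Real.rpow_natCast,
        ← Real.finset_prod_rpow E a hanonneg, ← Finset.prod_pow]
    rw [h1]
    exact pow_le_pow_left₀ (Finset.prod_nonneg fun e he => by positivity) hamgm 2
  -- combine
  have key : (m : ℝ) * ((∏ e ∈ E, dRad G e) ^ ((1 : ℝ) / m)
      + (1 / m) * ∑ e ∈ E, (a e - A) ^ 2) ≤ somborIndex G := by
    rw [hvar]
    have h2 : (m : ℝ) * (∏ e ∈ E, dRad G e) ^ ((1 : ℝ) / m) ≤ m * A ^ 2 :=
      mul_le_mul_of_nonneg_left hgm (le_of_lt hmpos)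
    have h3 : (m : ℝ) * ((1 / m) * (somborIndex G - m * A ^ 2))
        = somborIndex G - m * A ^ 2 := by field_simp
    rw [mul_add, h3]
    linarith
  exact key
end

section
/- If G has m ≥ 1 edges, M₂ denotes the maximum of the d-radii of the edges of G, R_g the geometric mean of the d-radii, and σ² = (1/m) Σ_{uv ∈ E(G)} (|z_{uv}| − SO(G)/m)² the variance of the d-radii, then m·(R_g + σ²/(2M₂)) ≤ SO(G). -/
open Finset Real

/-!
This is the Cartwright–Field refinement of AM–GM applied to the d-radii: for positive numbers
bounded by `M`, the geometric mean is at most the arithmetic mean minus `σ² / (2M)`. It is proved by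
induction, splitting off a largest number `a`. If `B` bounds the geometric mean of the others, the
two-point estimate `a ^ w * B ^ (1 - w) ≤ w a + (1 - w) B - w (1 - w) (a - B)² / (2a)` (a second
order Taylor bound for `t ↦ t ^ v` on `(0, 1]`) supplies exactly the variance that `a` adds,
because `a` lies above the old mean and the old mean lies above `B`.
-/

theorem one_add_mul_one_sub_le_rpow_neg {p x : ℝ} (hp0 : 0 ≤ p) (hp1 : p ≤ 1) (hx : 0 < x) :
    1 + p * (1 - x) ≤ x ^ (-p) := by
  have hbern := rpow_one_add_le_one_add_mul_self (s := x - 1) (by linarith) hp0 hp1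
  rw [add_sub_cancel] at hbern
  have hpos : 0 < x ^ p := rpow_pos_of_pos hx p
  rw [rpow_neg hx.le, inv_eq_one_div, le_div_iff₀ hpos]
  rcases le_or_gt 0 (1 + p * (1 - x)) with h | h
  · nlinarith [mul_le_mul_of_nonneg_left hbern h, sq_nonneg (p * (1 - x))]
  · nlinarith

theorem rpow_le_one_sub_mul_sub_sq {v t : ℝ} (hv0 : 0 ≤ v) (hv1 : v ≤ 1) (ht0 : 0 < t)
    (ht1 : t ≤ 1) : t ^ v ≤ 1 - v * (1 - t) - v * (1 - v) * (1 - t) ^ 2 / 2 := by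
  let f : ℝ → ℝ := fun s => 1 - v * (1 - s) - v * (1 - v) * (1 - s) ^ 2 / 2 - s ^ v
  have hf : AntitoneOn f (Set.Icc t 1) := by
    refine antitoneOn_of_hasDerivWithinAt_nonpos (convex_Icc t 1) ?_
      (f' := fun s => v + v * (1 - v) * (1 - s) - v * s ^ (v - 1)) (fun s hs => ?_) (fun s hs => ?_)
    · refine ContinuousOn.sub (by fun_prop) fun s hs => ?_
      exact (continuousAt_rpow_const s v (Or.inl (ht0.trans_le hs.1).ne')).continuousWithinAt
    · rw [interior_Icc] at hs
      have := ((((hasDerivAt_id s).const_sub 1).const_mul v).const_sub 1).sub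
        ((((hasDerivAt_id s).const_sub 1).pow 2).const_mul (v * (1 - v)) |>.div_const 2) |>.sub
        (hasDerivAt_rpow_const (p := v) (Or.inl (ht0.trans hs.1).ne'))
      exact (this.congr_deriv (by simp; ring)).hasDerivWithinAt
    · rw [interior_Icc] at hs
      have := one_add_mul_one_sub_le_rpow_neg (sub_nonneg.2 hv1) (by linarith) (ht0.trans hs.1)
      rw [neg_sub] at this
      nlinarith
  have := hf (Set.left_mem_Icc.2 ht1) (Set.right_mem_Icc.2 ht1) ht1
  simp [f] at this
  linarith

theorem rpow_mul_rpow_le_add_sub_sq_div {a b w : ℝ} (hb : 0 < b) (hba : b ≤ a) (hw0 : 0 ≤ w)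
    (hw1 : w ≤ 1) :
    a ^ w * b ^ (1 - w) ≤ w * a + (1 - w) * b - w * (1 - w) * (a - b) ^ 2 / (2 * a) := by
  have ha : 0 < a := hb.trans_le hba
  have key := rpow_le_one_sub_mul_sub_sq (sub_nonneg.2 hw1) (by linarith) (div_pos hb ha)
    ((div_le_one ha).2 hba)
  have hsplit : a ^ w * b ^ (1 - w) = a * (b / a) ^ (1 - w) := by
    rw [div_rpow hb.le ha.le, rpow_sub ha, rpow_one]
    field_simp
  calc a ^ w * b ^ (1 - w) = a * (b / a) ^ (1 - w) := hsplit
    _ ≤ a * (1 - (1 - w) * (1 - b / a) - (1 - w) * (1 - (1 - w)) * (1 - b / a) ^ 2 / 2) := by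
      gcongr
    _ = w * a + (1 - w) * b - w * (1 - w) * (a - b) ^ 2 / (2 * a) := by
      field_simp
      ring

theorem sum_sq_sub_eq_sum_sq_sub_mean_add {ι : Type*} (s : Finset ι) (a : ι → ℝ) (c : ℝ) :
    ∑ i ∈ s, (a i - c) ^ 2 =
      ∑ i ∈ s, (a i - (∑ j ∈ s, a j) / #s) ^ 2 + #s * ((∑ j ∈ s, a j) / #s - c) ^ 2 := by
  set A := (∑ j ∈ s, a j) / #s
  have hdev : ∑ i ∈ s, (a i - A) = 0 := by
    rcases s.eq_empty_or_nonempty with rfl | hs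
    · simp
    rw [sum_sub_distrib, sum_const, nsmul_eq_mul, mul_div_cancel₀ _ (by positivity), sub_self]
  calc ∑ i ∈ s, (a i - c) ^ 2
      = ∑ i ∈ s, ((a i - A) ^ 2 + 2 * (A - c) * (a i - A) + (A - c) ^ 2) :=
        sum_congr rfl fun i _ => by ring
    _ = _ := by rw [sum_add_distrib, sum_add_distrib, ← mul_sum, hdev]; simp

theorem sum_sq_sub_mean_insert {ι : Type*} [DecidableEq ι] {s : Finset ι} {i : ι} (hi : i ∉ s)
    (a : ι → ℝ) :
    ∑ x ∈ insert i s, (a x - (∑ y ∈ insert i s, a y) / #(insert i s)) ^ 2 =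
      ∑ x ∈ s, (a x - (∑ y ∈ s, a y) / #s) ^ 2
        + #s / (#s + 1) * (a i - (∑ y ∈ s, a y) / #s) ^ 2 := by
  rw [sum_insert hi, sum_insert hi, sum_sq_sub_eq_sum_sq_sub_mean_add s, card_insert_of_notMem hi]
  rcases s.eq_empty_or_nonempty with rfl | hs
  · simp
  have hS : ∑ y ∈ s, a y = #s * ((∑ y ∈ s, a y) / #s) := by
    rw [mul_div_cancel₀ _ (by positivity)]
  set A := (∑ y ∈ s, a y) / #s
  rw [hS]
  push_cast
  field_simp
  ring

theorem rpow_mul_rpow_le_of_le_sub_div {a g A V M j : ℝ} (hj : 0 < j) (hM : 0 < M) (hg : 0 < g)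
    (hV : 0 ≤ V) (hgA : g ≤ A - V / (2 * M * j)) (hAa : A ≤ a) (haM : a ≤ M) :
    a ^ (1 / (j + 1)) * g ^ (j / (j + 1)) ≤
      (a + j * A) / (j + 1) - (V + j / (j + 1) * (a - A) ^ 2) / (2 * M * (j + 1)) := by
  set B := A - V / (2 * M * j)
  have hBA : B ≤ A := sub_le_self _ (by positivity)
  have hB : 0 < B := hg.trans_le hgA
  have ha : 0 < a := hB.trans_le (hBA.trans hAa)
  have hw : j / (j + 1) = 1 - 1 / (j + 1) := by field_simp; ring
  have hw1 : 1 / (j + 1) ≤ 1 := div_le_one_of_le₀ (by linarith) (by positivity)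
  have hAB : (a - A) ^ 2 ≤ (a - B) ^ 2 := by gcongr
  calc a ^ (1 / (j + 1)) * g ^ (j / (j + 1))
      ≤ a ^ (1 / (j + 1)) * B ^ (1 - 1 / (j + 1)) := by rw [← hw]; gcongr
    _ ≤ 1 / (j + 1) * a + (1 - 1 / (j + 1)) * B
          - 1 / (j + 1) * (1 - 1 / (j + 1)) * (a - B) ^ 2 / (2 * a) :=
        rpow_mul_rpow_le_add_sub_sq_div hB (hBA.trans hAa) (by positivity) hw1
    _ ≤ 1 / (j + 1) * a + (1 - 1 / (j + 1)) * B
          - 1 / (j + 1) * (1 - 1 / (j + 1)) * (a - A) ^ 2 / (2 * M) := by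
        have : 0 ≤ 1 - 1 / (j + 1) := sub_nonneg.2 hw1
        gcongr
    _ = _ := by simp only [B]; field_simp; ring

theorem geom_mean_le_arith_mean_sub_sum_sq_div {ι : Type*} {s : Finset ι} (hs : s.Nonempty)
    {a : ι → ℝ} {M : ℝ} (ha : ∀ i ∈ s, 0 < a i) (haM : ∀ i ∈ s, a i ≤ M) :
    (∏ i ∈ s, a i) ^ ((1 : ℝ) / #s) ≤
      (∑ i ∈ s, a i) / #s - (∑ i ∈ s, (a i - (∑ j ∈ s, a j) / #s) ^ 2) / (2 * M * #s) := by
  classical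
  induction s using Finset.induction_on_max_value a with
  | empty => simp at hs
  | insert i t hi hmax ih =>
    rcases t.eq_empty_or_nonempty with rfl | ht
    · simp only [insert_empty_eq, prod_singleton, sum_singleton, card_singleton, Nat.cast_one,
        div_one, rpow_one, sub_self]
      rw [zero_pow two_ne_zero, zero_div, sub_zero]
    have hai : 0 < a i := ha i (mem_insert_self i t)
    have hP : 0 < ∏ x ∈ t, a x := prod_pos fun x hx => ha x (mem_insert_of_mem hx)
    have hj : (0 : ℝ) < #t := by exact_mod_cast ht.card_pos
    have hroot : (a i * ∏ x ∈ t, a x) ^ (1 / ((#t : ℝ) + 1)) =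
        a i ^ (1 / ((#t : ℝ) + 1)) * ((∏ x ∈ t, a x) ^ (1 / (#t : ℝ))) ^ ((#t : ℝ) / (#t + 1)) := by
      rw [mul_rpow hai.le hP.le, ← rpow_mul hP.le]
      congr 2
      field_simp
    have hsum : a i + ∑ x ∈ t, a x = a i + #t * ((∑ x ∈ t, a x) / #t) := by
      rw [mul_div_cancel₀ _ hj.ne']
    have hmean : (∑ x ∈ t, a x) / #t ≤ a i := by
      rw [div_le_iff₀ hj, mul_comm, ← nsmul_eq_mul, ← sum_const]
      exact sum_le_sum hmax
    rw [sum_sq_sub_mean_insert hi, prod_insert hi, sum_insert hi, card_insert_of_notMem hi,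
      Nat.cast_succ, hroot, hsum]
    exact rpow_mul_rpow_le_of_le_sub_div hj (hai.trans_le (haM i (mem_insert_self i t)))
      (rpow_pos_of_pos hP _) (sum_nonneg fun _ _ => sq_nonneg _)
      (ih ht (fun x hx => ha x (mem_insert_of_mem hx)) fun x hx => haM x (mem_insert_of_mem hx))
      hmean (haM i (mem_insert_self i t))

theorem dRad_pos {V : Type*} [Fintype V] (G : SimpleGraph V) [DecidableRel G.Adj] {e : Sym2 V}
    (he : e ∈ G.edgeSet) : 0 < dRad G e := by
  induction e using Sym2.ind with
  | _ u v =>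
    have hu : 0 < G.degree u := G.degree_pos_iff_exists_adj u |>.2 ⟨v, he⟩
    exact sqrt_pos.2 (by positivity)

theorem stmt5_general {V : Type*} [Fintype V] [DecidableEq V] (G : SimpleGraph V) [DecidableRel G.Adj]
    (m : ℕ) (hm : G.edgeFinset.card = m) (h1 : 1 ≤ m) (M₂ : ℝ)
    (hub : ∀ e ∈ G.edgeFinset, dRad G e ≤ M₂) :
    (m : ℝ) * ((∏ e ∈ G.edgeFinset, dRad G e) ^ ((1 : ℝ) / m)
        + ((1 / m) * ∑ e ∈ G.edgeFinset, (dRad G e - somborIndex G / m) ^ 2) / (2 * M₂))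
      ≤ somborIndex G := by
  subst hm
  have hn : (0 : ℝ) < #G.edgeFinset := by exact_mod_cast h1
  set n : ℝ := (#G.edgeFinset : ℝ)
  obtain ⟨e, he⟩ := card_pos.1 h1
  have hpos : ∀ e ∈ G.edgeFinset, 0 < dRad G e := fun e he => dRad_pos G (G.mem_edgeFinset.1 he)
  have hM : 0 < M₂ := (hpos e he).trans_le (hub e he)
  have key := geom_mean_le_arith_mean_sub_sum_sq_div ⟨e, he⟩ hpos hub
  rw [← somborIndex] at key
  set S := ∑ e ∈ G.edgeFinset, (dRad G e - somborIndex G / n) ^ 2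
  calc n * ((∏ e ∈ G.edgeFinset, dRad G e) ^ (1 / n) + (1 / n * S) / (2 * M₂))
      = n * (∏ e ∈ G.edgeFinset, dRad G e) ^ (1 / n) + S / (2 * M₂) := by field_simp
    _ ≤ n * (somborIndex G / n - S / (2 * M₂ * n)) + S / (2 * M₂) := by gcongr
    _ = somborIndex G := by field_simp; ring

/-- If `G` has `m ≥ 1` edges, `M₂` is the maximum of the d-radii, `R_g` the geometric mean of
the d-radii and `σ²` their variance, then `m·(R_g + σ²/(2M₂)) ≤ SO(G)`. -/
theorem stmt5 {V : Type*} [Fintype V] [DecidableEq V] (G : SimpleGraph V) [DecidableRel G.Adj]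
    (m : ℕ) (hm : G.edgeFinset.card = m) (h1 : 1 ≤ m) (M₂ : ℝ)
    (hub : ∀ e ∈ G.edgeFinset, dRad G e ≤ M₂)
    (hmem : ∃ e ∈ G.edgeFinset, dRad G e = M₂) :
    (m : ℝ) * ((∏ e ∈ G.edgeFinset, dRad G e) ^ ((1 : ℝ) / m)
        + ((1 / m) * ∑ e ∈ G.edgeFinset, (dRad G e - somborIndex G / m) ^ 2) / (2 * M₂))
      ≤ somborIndex G :=
  stmt5_general G m hm h1 M₂ hub
end

section
/- The arithmetic-geometric index of G is at most its Sombor index: AG(G) ≤ SO(G). -/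
open Finset Real

noncomputable def agIndex {V : Type*} [Fintype V] [DecidableEq V] (G : SimpleGraph V)
    [DecidableRel G.Adj] : ℝ :=
  ∑ e ∈ G.edgeFinset,
    Sym2.lift ⟨fun u v => ((G.degree u : ℝ) + (G.degree v : ℝ))
        / (2 * Real.sqrt ((G.degree u : ℝ) * (G.degree v : ℝ))),
      fun u v => by ring_nf⟩ e

lemma key_ineq (a b : ℝ) (ha : 1 ≤ a) (hb : 1 ≤ b) :
    (a + b) / (2 * Real.sqrt (a * b)) ≤ Real.sqrt (a ^ 2 + b ^ 2) := by
  have ha0 : (0:ℝ) ≤ a := by linarith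
  have hb0 : (0:ℝ) ≤ b := by linarith
  have hs1 : (1:ℝ) ≤ Real.sqrt (a * b) := by
    rw [show (1:ℝ) = Real.sqrt 1 by simp]
    exact Real.sqrt_le_sqrt (by nlinarith)
  have h1 : (a + b) / (2 * Real.sqrt (a * b)) ≤ (a + b) / 2 := by
    apply div_le_div_of_nonneg_left (by linarith) (by norm_num) (by linarith)
  have h2 : (a + b) / 2 ≤ Real.sqrt (a ^ 2 + b ^ 2) := by
    rw [show (a + b) / 2 = Real.sqrt (((a+b)/2)^2) by
      rw [Real.sqrt_sq (by linarith)]]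
    exact Real.sqrt_le_sqrt (by nlinarith)
  linarith

/-- The arithmetic-geometric index of `G` is at most its Sombor index: `AG(G) ≤ SO(G)`. -/
theorem stmt14 {V : Type*} [Fintype V] [DecidableEq V] (G : SimpleGraph V)
    [DecidableRel G.Adj] :
    agIndex G ≤ somborIndex G := by
  unfold agIndex somborIndex
  apply Finset.sum_le_sum
  intro e he
  induction e with
  | _ u v =>
    rw [SimpleGraph.mem_edgeFinset, SimpleGraph.mem_edgeSet] at he
    have hu : 1 ≤ (G.degree u : ℝ) := by
      have : 0 < G.degree u := G.degree_pos_iff_exists_adj u |>.mpr ⟨v, he⟩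
      exact_mod_cast this
    have hv : 1 ≤ (G.degree v : ℝ) := by
      have : 0 < G.degree v := G.degree_pos_iff_exists_adj v |>.mpr ⟨u, he.symm⟩
      exact_mod_cast this
    simpa [dRad] using key_ineq (G.degree u) (G.degree v) hu hv
end

section
/- If G has minimum degree δ ≥ 2 and n vertices, then √2·δ·AG(G) ≤ SO(G) ≤ √2·(n−1)·AG(G). -/
open Finset Real

lemma aux_low (a b d : ℝ) (hd : 1 ≤ d) (ha : d ≤ a) (hb : d ≤ b) :
    Real.sqrt 2 * d * ((a + b) / (2 * Real.sqrt (a * b))) ≤ Real.sqrt (a^2 + b^2) := by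
  have ha0 : (0:ℝ) < a := lt_of_lt_of_le (by linarith) ha
  have hb0 : (0:ℝ) < b := lt_of_lt_of_le (by linarith) hb
  have hab : (0:ℝ) < a * b := mul_pos ha0 hb0
  have hs : 0 < Real.sqrt (a*b) := Real.sqrt_pos.mpr hab
  have hsq : Real.sqrt (a*b) ^ 2 = a * b := Real.sq_sqrt hab.le
  have h2 : Real.sqrt 2 ^ 2 = 2 := Real.sq_sqrt (by norm_num)
  rw [Real.le_sqrt (by positivity) (by positivity)]
  have key : (Real.sqrt 2 * d * ((a + b) / (2 * Real.sqrt (a * b))))^2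
      = 2 * d^2 * (a+b)^2 / (4 * (a*b)) := by
    rw [mul_pow, mul_pow, div_pow, mul_pow, h2, hsq]
    ring
  rw [key, div_le_iff₀ (by positivity)]
  have hdab : d^2 ≤ a * b := by nlinarith
  nlinarith [sq_nonneg (a - b), sq_nonneg (a+b), hab]

lemma aux_high (a b c : ℝ) (ha0 : 0 < a) (hb0 : 0 < b) (hac : a ≤ c) (hbc : b ≤ c) :
    Real.sqrt (a^2 + b^2) ≤ Real.sqrt 2 * c * ((a + b) / (2 * Real.sqrt (a * b))) := by
  have hab : (0:ℝ) < a * b := mul_pos ha0 hb0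
  have hs : 0 < Real.sqrt (a*b) := Real.sqrt_pos.mpr hab
  have hsq : Real.sqrt (a*b) ^ 2 = a * b := Real.sq_sqrt hab.le
  have h1 : Real.sqrt (a^2 + b^2) ≤ Real.sqrt 2 * c := by
    rw [show Real.sqrt 2 * c = Real.sqrt (2 * c^2) by
      rw [Real.sqrt_mul (by norm_num), Real.sqrt_sq (by linarith)]]
    apply Real.sqrt_le_sqrt; nlinarith
  have h2 : (1:ℝ) ≤ (a + b) / (2 * Real.sqrt (a * b)) := by
    rw [le_div_iff₀ (by positivity)]
    nlinarith [sq_nonneg (Real.sqrt a - Real.sqrt b), Real.sq_sqrt ha0.le, Real.sq_sqrt hb0.le,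
      Real.sqrt_mul ha0.le b, Real.sqrt_nonneg a, Real.sqrt_nonneg b]
  calc Real.sqrt (a^2+b^2) ≤ Real.sqrt 2 * c := h1
    _ = Real.sqrt 2 * c * 1 := by ring
    _ ≤ _ := mul_le_mul_of_nonneg_left h2
        (mul_nonneg (Real.sqrt_nonneg 2) (by linarith))

/-- If `G` has minimum degree `δ ≥ 2` and `n` vertices, then
`√2·δ·AG(G) ≤ SO(G) ≤ √2·(n−1)·AG(G)`. -/
theorem stmt15 {V : Type*} [Fintype V] [DecidableEq V] [Nonempty V] (G : SimpleGraph V)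
    [DecidableRel G.Adj] (hδ : 2 ≤ G.minDegree) :
    Real.sqrt 2 * (G.minDegree : ℝ) * agIndex G ≤ somborIndex G ∧
      somborIndex G ≤ Real.sqrt 2 * ((Fintype.card V : ℝ) - 1) * agIndex G := by
  have hcard : 1 ≤ Fintype.card V := Fintype.card_pos
  constructor
  · rw [agIndex, somborIndex, Finset.mul_sum]
    apply Finset.sum_le_sum
    intro e he
    induction e using Sym2.ind with
    | _ u v =>
      simp only [dRad, Sym2.lift_mk]
      exact aux_low _ _ _ (by exact_mod_cast le_trans (by norm_num) hδ)
        (by exact_mod_cast G.minDegree_le_degree u)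
        (by exact_mod_cast G.minDegree_le_degree v)
  · rw [agIndex, somborIndex, Finset.mul_sum]
    apply Finset.sum_le_sum
    intro e he
    induction e using Sym2.ind with
    | _ u v =>
      have hadj : G.Adj u v := by
        rw [SimpleGraph.mem_edgeFinset, SimpleGraph.mem_edgeSet] at he
        exact he
      have hdu : 0 < G.degree u := G.degree_pos_iff_exists_adj u |>.mpr ⟨v, hadj⟩
      have hdv : 0 < G.degree v := G.degree_pos_iff_exists_adj v |>.mpr ⟨u, hadj.symm⟩
      have hu : (G.degree u : ℝ) ≤ (Fintype.card V : ℝ) - 1 := by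
        have := G.degree_lt_card_verts u
        have : G.degree u ≤ Fintype.card V - 1 := Nat.le_sub_one_of_lt this
        calc (G.degree u : ℝ) ≤ ((Fintype.card V - 1 : ℕ) : ℝ) := by exact_mod_cast this
          _ = (Fintype.card V : ℝ) - 1 := by push_cast [hcard]; ring
      have hv : (G.degree v : ℝ) ≤ (Fintype.card V : ℝ) - 1 := by
        have := G.degree_lt_card_verts v
        have : G.degree v ≤ Fintype.card V - 1 := Nat.le_sub_one_of_lt this
        calc (G.degree v : ℝ) ≤ ((Fintype.card V - 1 : ℕ) : ℝ) := by exact_mod_cast this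
          _ = (Fintype.card V : ℝ) - 1 := by push_cast [hcard]; ring
      simp only [dRad, Sym2.lift_mk]
      exact aux_high _ _ _ (by exact_mod_cast hdu) (by exact_mod_cast hdv) hu hv
end

section
/- If G has minimum degree δ ≥ 2 and n vertices, then (√2/2)·δ·SDD(G) ≤ SO(G) ≤ (√2/2)·(n−1)·SDD(G). -/
open Finset Real

noncomputable def sddIndex {V : Type*} [Fintype V] [DecidableEq V] (G : SimpleGraph V)
    [DecidableRel G.Adj] : ℝ :=
  ∑ e ∈ G.edgeFinset,
    Sym2.lift ⟨fun u v => ((G.degree u : ℝ) ^ 2 + (G.degree v : ℝ) ^ 2)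
        / ((G.degree u : ℝ) * (G.degree v : ℝ)),
      fun u v => by ring_nf⟩ e

lemma key18 (a b d c : ℝ) (ha : 0 < a) (hb : 0 < b) (hd : 0 < d) (hda : d ≤ a)
    (hdb : d ≤ b) (hac : a ≤ c) (hbc : b ≤ c) :
    Real.sqrt 2 / 2 * d * ((a^2+b^2)/(a*b)) ≤ Real.sqrt (a^2+b^2) ∧
    Real.sqrt (a^2+b^2) ≤ Real.sqrt 2 / 2 * c * ((a^2+b^2)/(a*b)) := by
  have hab : 0 < a * b := by positivity
  set s := Real.sqrt (a^2+b^2) with hs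
  have hs2 : s^2 = a^2+b^2 := Real.sq_sqrt (by positivity)
  have hs0 : 0 < s := Real.sqrt_pos.2 (by positivity)
  have h2 : Real.sqrt 2 ^ 2 = 2 := Real.sq_sqrt (by norm_num)
  have h20 : 0 ≤ Real.sqrt 2 := Real.sqrt_nonneg 2
  have hkey1 : Real.sqrt 2 * d * s ≤ 2 * (a * b) := by
    have h1 : (Real.sqrt 2 * d * s)^2 ≤ (2*(a*b))^2 := by
      have : (Real.sqrt 2 * d * s)^2 = 2 * d^2 * (a^2+b^2) := by
        rw [mul_pow, mul_pow, h2, hs2]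
      rw [this]
      have hd2a : d^2 ≤ a^2 := by nlinarith
      have hd2b : d^2 ≤ b^2 := by nlinarith
      nlinarith [sq_nonneg a, sq_nonneg b, hd2a, hd2b]
    calc Real.sqrt 2 * d * s = Real.sqrt ((Real.sqrt 2 * d * s)^2) :=
          (Real.sqrt_sq (by positivity)).symm
      _ ≤ Real.sqrt ((2*(a*b))^2) := Real.sqrt_le_sqrt h1
      _ = 2*(a*b) := Real.sqrt_sq (by positivity)
  have hkey2 : 2 * (a * b) ≤ Real.sqrt 2 * c * s := by
    have h1 : (2*(a*b))^2 ≤ (Real.sqrt 2 * c * s)^2 := by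
      have : (Real.sqrt 2 * c * s)^2 = 2 * c^2 * (a^2+b^2) := by
        rw [mul_pow, mul_pow, h2, hs2]
      rw [this]
      have hc2a : a^2 ≤ c^2 := by nlinarith
      have hc2b : b^2 ≤ c^2 := by nlinarith
      nlinarith [sq_nonneg a, sq_nonneg b, hc2a, hc2b]
    calc 2*(a*b) = Real.sqrt ((2*(a*b))^2) := (Real.sqrt_sq (by positivity)).symm
      _ ≤ Real.sqrt ((Real.sqrt 2 * c * s)^2) := Real.sqrt_le_sqrt h1
      _ = Real.sqrt 2 * c * s := Real.sqrt_sq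
            (mul_nonneg (mul_nonneg (Real.sqrt_nonneg 2) (le_trans ha.le hac)) hs0.le)
  constructor
  · rw [mul_div_assoc'] -- X * Y / Z form?
    rw [div_le_iff₀ hab]
    have := mul_le_mul_of_nonneg_right hkey1 hs0.le
    nlinarith [hs2]
  · rw [mul_div_assoc', le_div_iff₀ hab]
    have := mul_le_mul_of_nonneg_right hkey2 hs0.le
    nlinarith [hs2]

/-- If `G` has minimum degree `δ ≥ 2` and `n` vertices, then
`(√2/2)·δ·SDD(G) ≤ SO(G) ≤ (√2/2)·(n−1)·SDD(G)`. -/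
theorem stmt18 {V : Type*} [Fintype V] [DecidableEq V] [Nonempty V] (G : SimpleGraph V)
    [DecidableRel G.Adj] (hδ : 2 ≤ G.minDegree) :
    Real.sqrt 2 / 2 * (G.minDegree : ℝ) * sddIndex G ≤ somborIndex G ∧
      somborIndex G ≤ Real.sqrt 2 / 2 * ((Fintype.card V : ℝ) - 1) * sddIndex G := by
  have hmain : ∀ e ∈ G.edgeFinset,
      (Real.sqrt 2 / 2 * (G.minDegree : ℝ) *
        Sym2.lift ⟨fun u v => ((G.degree u : ℝ) ^ 2 + (G.degree v : ℝ) ^ 2)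
          / ((G.degree u : ℝ) * (G.degree v : ℝ)), fun u v => by ring_nf⟩ e ≤ dRad G e)
      ∧ dRad G e ≤ Real.sqrt 2 / 2 * ((Fintype.card V : ℝ) - 1) *
        Sym2.lift ⟨fun u v => ((G.degree u : ℝ) ^ 2 + (G.degree v : ℝ) ^ 2)
          / ((G.degree u : ℝ) * (G.degree v : ℝ)), fun u v => by ring_nf⟩ e := by
    intro e he
    induction e using Sym2.ind with
    | _ u v =>
      simp only [dRad, Sym2.lift_mk]
      have hdu : G.minDegree ≤ G.degree u := G.minDegree_le_degree u
      have hdv : G.minDegree ≤ G.degree v := G.minDegree_le_degree v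
      have hcu : G.degree u < Fintype.card V := G.degree_lt_card_verts u
      have hcv : G.degree v < Fintype.card V := G.degree_lt_card_verts v
      have h1 : (0:ℝ) < G.degree u := by
        have : 0 < G.degree u := lt_of_lt_of_le (by omega) hdu
        exact_mod_cast this
      have h2 : (0:ℝ) < G.degree v := by
        have : 0 < G.degree v := lt_of_lt_of_le (by omega) hdv
        exact_mod_cast this
      have hd0 : (0:ℝ) < G.minDegree := by exact_mod_cast lt_of_lt_of_le (by norm_num) hδ
      exact key18 _ _ _ _ h1 h2 hd0 (by exact_mod_cast hdu) (by exact_mod_cast hdv)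
        (by
          have h : (G.degree u:ℝ) + 1 ≤ Fintype.card V := by exact_mod_cast hcu
          linarith)
        (by
          have h : (G.degree v:ℝ) + 1 ≤ Fintype.card V := by exact_mod_cast hcv
          linarith)
  constructor
  · rw [somborIndex, sddIndex, Finset.mul_sum]
    exact Finset.sum_le_sum fun e he => (hmain e he).1
  · rw [somborIndex, sddIndex, Finset.mul_sum]
    exact Finset.sum_le_sum fun e he => (hmain e he).2
end
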